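/- On the lattice [2]^{*n} (the lattice with minimum ⊥, maximum ⊤, and n pairwise incomparable middle elements 1,…,n), every wide decomposable subcategory is the weak equivalence class of some model structure, and the number of wide decomposable subcategories is 3^n + 1. -/

import Mathlib

variable {P : Type*}

section Defs
variable [Lattice P]

/-- A wide subcategory of the poset category of `P`: contains all identities,
refines `≤`, and is closed under composition. -/
def IsWide (R : P → P → Prop) : Prop :=
  (∀ x, R x x) ∧ (∀ x y, R x y → x ≤ y) ∧ (∀ x y z, R x y → R y z → R x z)

/-- A decomposable subcategory: if a composite is in `R`, so are both factors. -/
def IsDecomposable (R : P → P → Prop) : Prop :=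
  ∀ x y z : P, x ≤ y → y ≤ z → R x z → R x y ∧ R y z

/-- A transfer system: a partial order refining `≤`, closed under restriction
(pullback) along meets. -/
def IsTransferSystem (R : P → P → Prop) : Prop :=
  (∀ x, R x x) ∧ (∀ x y z, R x y → R y z → R x z) ∧
  (∀ x y, R x y → R y x → x = y) ∧
  (∀ x y, R x y → x ≤ y) ∧
  (∀ x y z, R x y → z ≤ y → R (x ⊓ z) z)

/-- A cotransfer system: a partial order refining `≤`, closed under
cobase change (pushout) along joins. -/
def IsCotransferSystem (R : P → P → Prop) : Prop :=
  (∀ x, R x x) ∧ (∀ x y z, R x y → R y z → R x z) ∧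
  (∀ x y, R x y → R y x → x = y) ∧
  (∀ x y, R x y → x ≤ y) ∧
  (∀ x y z, R x y → x ≤ z → R z (y ⊔ z))

/-- Closed under pullbacks: the pullback of `b → d` along `c → d` is `b ⊓ c → c`. -/
def PullbackClosed (R : P → P → Prop) : Prop :=
  ∀ b c d : P, R b d → c ≤ d → R (b ⊓ c) c

/-- Closed under pushouts: the pushout of `a → b` along `a → c` is `c → b ⊔ c`. -/
def PushoutClosed (R : P → P → Prop) : Prop :=
  ∀ a b c : P, R a b → a ≤ c → R c (b ⊔ c)

/-- The left lifting class of a class `S` of morphisms of the poset category: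
pairs `(a,b)` with `a ≤ b` having the left lifting property against every
member of `S`. -/
def LLP (S : P → P → Prop) (a b : P) : Prop :=
  a ≤ b ∧ ∀ x y, S x y → a ≤ x → b ≤ y → b ≤ x

/-- The right lifting class of a class `S` of morphisms of the poset category. -/
def RLP (S : P → P → Prop) (x y : P) : Prop :=
  x ≤ y ∧ ∀ a b, S a b → a ≤ x → b ≤ y → b ≤ x

/-- A weak factorization system `(L, R)`: every morphism factors as a map in `L`
followed by a map in `R`, and `L = ᵇR`, `R = Lᵇ`. -/
def IsWFS (L R : P → P → Prop) : Prop :=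
  (∀ x y : P, x ≤ y → ∃ z, L x z ∧ R z y) ∧
  (∀ a b, L a b ↔ LLP R a b) ∧
  (∀ x y, R x y ↔ RLP L x y)

/-- The composite class `S ∘ T` (first `T`, then `S`). -/
def Comp (S T : P → P → Prop) (x z : P) : Prop :=
  ∃ y, T x y ∧ S y z

/-- The two-out-of-three property for a class of morphisms. -/
def TwoOutOfThree (W : P → P → Prop) : Prop :=
  ∀ x y z : P, x ≤ y → y ≤ z →
    ((W x y → W y z → W x z) ∧ (W x y → W x z → W y z) ∧ (W y z → W x z → W x y))

/-- A model structure on the poset category of `P`, given by acyclic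
cofibrations, fibrations, cofibrations and acyclic fibrations: two weak
factorization systems `(AC, F)` and `(C, AF)` with `AC ⊆ C`, such that
`W := AF ∘ AC` satisfies two-out-of-three. -/
def IsModel (AC F C AF : P → P → Prop) : Prop :=
  IsWFS AC F ∧ IsWFS C AF ∧ (∀ x y, AC x y → C x y) ∧
  TwoOutOfThree (Comp AF AC)

/-- `T` occurs as the class of acyclic fibrations of a model structure whose
class of weak equivalences is `W`. -/
def OccursAsAF (W T : P → P → Prop) : Prop :=
  ∃ AC F C, IsModel AC F C T ∧ ∀ x y, Comp T AC x y ↔ W x y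

end Defs
/-- The lattice `[2]^{*n}`: a minimum `⊥`, a maximum `⊤`, and `n` pairwise
incomparable middle elements. -/
inductive StarL (n : ℕ) : Type
  | bot : StarL n
  | mid : Fin n → StarL n
  | top : StarL n
  deriving DecidableEq

namespace StarL
variable {n : ℕ}

protected def le : StarL n → StarL n → Prop
  | .bot, _ => True
  | .mid i, .mid j => i = j
  | .mid _, .top => True
  | .mid _, .bot => False
  | .top, .top => True
  | .top, _ => False

instance : PartialOrder (StarL n) where
  le := StarL.le
  le_refl a := by cases a <;> simp [StarL.le]
  le_trans a b c hab hbc := by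
    cases a <;> cases b <;> cases c <;> simp_all [StarL.le]
  le_antisymm a b hab hba := by
    cases a <;> cases b <;> simp_all [StarL.le]

protected def sup : StarL n → StarL n → StarL n
  | .bot, b => b
  | a, .bot => a
  | .top, _ => .top
  | _, .top => .top
  | .mid i, .mid j => if i = j then .mid i else .top

protected def inf : StarL n → StarL n → StarL n
  | .top, b => b
  | a, .top => a
  | .bot, _ => .bot
  | _, .bot => .bot
  | .mid i, .mid j => if i = j then .mid i else .bot

instance : Lattice (StarL n) where
  sup := StarL.sup
  le_sup_left a b := by
    cases a <;> cases b <;> simp only [StarL.sup] <;>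
      (try split_ifs) <;> simp_all [(· ≤ ·), StarL.le]
  le_sup_right a b := by
    cases a <;> cases b <;> simp only [StarL.sup] <;>
      (try split_ifs) <;> simp_all [(· ≤ ·), StarL.le]
  sup_le a b c hac hbc := by
    cases a <;> cases b <;> cases c <;> simp only [StarL.sup] <;>
      (try split_ifs) <;> simp_all [(· ≤ ·), StarL.le]
  inf := StarL.inf
  inf_le_left a b := by
    cases a <;> cases b <;> simp only [StarL.inf] <;>
      (try split_ifs) <;> simp_all [(· ≤ ·), StarL.le]
  inf_le_right a b := by
    cases a <;> cases b <;> simp only [StarL.inf] <;>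
      (try split_ifs) <;> simp_all [(· ≤ ·), StarL.le]
  le_inf a b c hab hac := by
    cases a <;> cases b <;> cases c <;> simp only [StarL.inf] <;>
      (try split_ifs) <;> simp_all [(· ≤ ·), StarL.le]

end StarL

namespace StarLProof
open StarL
variable {n : ℕ}

lemma le_iff (x y : StarL n) : x ≤ y ↔ (x = .bot ∨ y = .top ∨ x = y) := by
  cases x <;> cases y <;> simp [(· ≤ ·), StarL.le]

lemma bot_le' (x : StarL n) : StarL.bot ≤ x := (le_iff _ _).2 (Or.inl rfl)
lemma le_top' (x : StarL n) : x ≤ StarL.top := (le_iff _ _).2 (Or.inr (Or.inl rfl))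

lemma le_bot' {x : StarL n} (h : x ≤ StarL.bot) : x = StarL.bot := by
  rcases (le_iff _ _).1 h with h | h | h <;> simp_all

lemma top_le' {x : StarL n} (h : StarL.top ≤ x) : x = StarL.top := by
  rcases (le_iff _ _).1 h with h | h | h <;> simp_all

lemma mid_le' {i : Fin n} {x : StarL n} (h : StarL.mid i ≤ x) :
    x = StarL.mid i ∨ x = StarL.top := by
  rcases (le_iff _ _).1 h with h | h | h <;> simp_all

/-- Acyclic cofibrations: identities and the arrows `mid i → ⊤` with `u i`. -/
def ACu (u : Fin n → Prop) : StarL n → StarL n → Prop :=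
  fun x y => x = y ∨ ∃ i, x = .mid i ∧ y = .top ∧ u i

/-- Fibrations: everything except the arrows `mid i → ⊤` with `u i`. -/
def Fu (u : Fin n → Prop) : StarL n → StarL n → Prop :=
  fun x y => x ≤ y ∧ ∀ i, x = .mid i → y = .top → ¬ u i

/-- Acyclic fibrations: identities and the arrows `⊥ → mid i` with `d i`. -/
def AFd (d : Fin n → Prop) : StarL n → StarL n → Prop :=
  fun x y => x = y ∨ ∃ i, x = .bot ∧ y = .mid i ∧ d i

/-- Cofibrations: everything except the arrows `⊥ → mid i` with `d i`. -/
def Cd (d : Fin n → Prop) : StarL n → StarL n → Prop :=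
  fun x y => x ≤ y ∧ ∀ i, x = .bot → y = .mid i → ¬ d i

lemma wfs_AC (u : Fin n → Prop) : IsWFS (ACu u) (Fu u) := by
  refine ⟨?_, ?_, ?_⟩
  · intro x y hxy
    by_cases h : ∃ i, x = .mid i ∧ y = .top ∧ u i
    · obtain ⟨i, hx, hy, hu⟩ := h
      exact ⟨.top, Or.inr ⟨i, hx, rfl, hu⟩, hy ▸ le_refl _, fun j hj => by simp_all⟩
    · exact ⟨x, Or.inl rfl, hxy, fun i hx hy hu => h ⟨i, hx, hy, hu⟩⟩
  · intro a b
    constructor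
    · rintro (rfl | ⟨i, rfl, rfl, hu⟩)
      · exact ⟨le_refl _, fun x y _ hax _ => hax⟩
      · refine ⟨le_top' _, fun x y hF hax hby => ?_⟩
        rcases mid_le' hax with rfl | rfl
        · exact absurd hu (hF.2 i rfl (top_le' hby))
        · exact le_refl _
    · rintro ⟨hab, hl⟩
      rcases a with _ | i | _ <;> rcases b with _ | j | _
      · exact Or.inl rfl
      · exact absurd (le_bot' (hl .bot (.mid j) ⟨bot_le' _, by simp⟩ (le_refl _) (le_refl _)))
          (by simp)
      · exact absurd (le_bot' (hl .bot .top ⟨bot_le' _, by simp⟩ (le_refl _) (le_refl _)))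
          (by simp)
      · exact absurd hab (by simp [le_iff])
      · rcases (le_iff _ _).1 hab with h | h | h
        · simp at h
        · simp at h
        · exact h ▸ Or.inl rfl
      · by_cases hu : u i
        · exact Or.inr ⟨i, rfl, rfl, hu⟩
        · have := hl (.mid i) .top ⟨le_top' _, fun j h1 _ => by
            simp only [StarL.mid.injEq] at h1; exact h1 ▸ hu⟩ (le_refl _) (le_refl _)
          exact absurd (top_le' this) (by simp)
      · exact absurd hab (by simp [le_iff])
      · exact absurd hab (by simp [le_iff])
      · exact Or.inl rfl
  · intro x y
    constructor
    · rintro ⟨hxy, hc⟩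
      refine ⟨hxy, fun a b hab hax hby => ?_⟩
      rcases hab with rfl | ⟨i, rfl, rfl, hu⟩
      · exact hax
      · rcases mid_le' hax with rfl | rfl
        · exact absurd hu (hc i rfl (top_le' hby))
        · exact le_refl _
    · rintro ⟨hxy, hr⟩
      refine ⟨hxy, fun i hx hy hu => ?_⟩
      subst hx; subst hy
      exact absurd (top_le' (hr (.mid i) .top (Or.inr ⟨i, rfl, rfl, hu⟩)
        (le_refl _) (le_refl _))) (by simp)

lemma wfs_C (d : Fin n → Prop) : IsWFS (Cd d) (AFd d) := by
  refine ⟨?_, ?_, ?_⟩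
  · intro x y hxy
    by_cases h : ∃ i, x = .bot ∧ y = .mid i ∧ d i
    · obtain ⟨i, hx, hy, hd⟩ := h
      exact ⟨.bot, ⟨hx ▸ le_refl _, fun j _ hj => by simp_all⟩, Or.inr ⟨i, rfl, hy, hd⟩⟩
    · exact ⟨y, ⟨hxy, fun i hx hy hd => h ⟨i, hx, hy, hd⟩⟩, Or.inl rfl⟩
  · intro a b
    constructor
    · rintro ⟨hab, hc⟩
      refine ⟨hab, fun x y hxy hax hby => ?_⟩
      rcases hxy with rfl | ⟨i, rfl, rfl, hd⟩
      · exact hby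
      · have ha : a = .bot := le_bot' hax
        rcases (le_iff _ _).1 hby with rfl | h | rfl
        · exact le_refl _
        · simp at h
        · exact absurd hd (hc i ha rfl)
    · rintro ⟨hab, hl⟩
      refine ⟨hab, fun i ha hb hd => ?_⟩
      subst ha; subst hb
      exact absurd (le_bot' (hl .bot (.mid i) (Or.inr ⟨i, rfl, rfl, hd⟩)
        (le_refl _) (le_refl _))) (by simp)
  · intro x y
    constructor
    · rintro (rfl | ⟨i, rfl, rfl, hd⟩)
      · exact ⟨le_refl _, fun a b _ _ hby => hby⟩
      · refine ⟨bot_le' _, fun a b hC hax hby => ?_⟩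
        have ha : a = .bot := le_bot' hax
        rcases (le_iff _ _).1 hby with rfl | h | rfl
        · exact le_refl _
        · simp at h
        · exact absurd hd (hC.2 i ha rfl)
    · rintro ⟨hxy, hr⟩
      rcases x with _ | i | _ <;> rcases y with _ | j | _
      · exact Or.inl rfl
      · by_cases hd : d j
        · exact Or.inr ⟨j, rfl, rfl, hd⟩
        · have := hr .bot (.mid j) ⟨bot_le' _, fun i _ h2 => by
            simp only [StarL.mid.injEq] at h2; exact h2 ▸ hd⟩ (le_refl _) (le_refl _)
          exact absurd (le_bot' this) (by simp)
      · have := hr .bot .top ⟨bot_le' _, by simp⟩ (le_refl _) (le_refl _)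
        exact absurd (le_bot' this) (by simp)
      · exact absurd hxy (by simp [le_iff])
      · rcases (le_iff _ _).1 hxy with h | h | h
        · simp at h
        · simp at h
        · exact h ▸ Or.inl rfl
      · have := hr (.mid i) .top ⟨le_top' _, by simp⟩ (le_refl _) (le_refl _)
        exact absurd (top_le' this) (by simp)
      · exact absurd hxy (by simp [le_iff])
      · exact absurd hxy (by simp [le_iff])
      · exact Or.inl rfl

lemma comp_iff (u d : Fin n → Prop) (x z : StarL n) :
    Comp (AFd d) (ACu u) x z ↔
      (x = z ∨ (∃ i, x = .bot ∧ z = .mid i ∧ d i) ∨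
        (∃ i, x = .mid i ∧ z = .top ∧ u i)) := by
  constructor
  · rintro ⟨y, (rfl | ⟨i, rfl, rfl, hu⟩), hyz⟩
    · rcases hyz with rfl | ⟨i, rfl, rfl, hd⟩
      · exact Or.inl rfl
      · exact Or.inr (Or.inl ⟨i, rfl, rfl, hd⟩)
    · rcases hyz with rfl | ⟨j, h, _, _⟩
      · exact Or.inr (Or.inr ⟨i, rfl, rfl, hu⟩)
      · simp at h
  · rintro (rfl | ⟨i, rfl, rfl, hd⟩ | ⟨i, rfl, rfl, hu⟩)
    · exact ⟨x, Or.inl rfl, Or.inl rfl⟩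
    · exact ⟨.bot, Or.inl rfl, Or.inr ⟨i, rfl, rfl, hd⟩⟩
    · exact ⟨.top, Or.inr ⟨i, rfl, rfl, hu⟩, Or.inl rfl⟩

lemma twoOutOfThree_of_iff {P : Type*} [Lattice P] {W Q : P → P → Prop}
    (hiff : ∀ x y, W x y ↔ Q x y) (hw : IsWide Q) (hd : IsDecomposable Q) :
    TwoOutOfThree W := by
  intro x y z hxy hyz
  simp only [hiff]
  exact ⟨fun h1 h2 => hw.2.2 _ _ _ h1 h2,
    fun _ h2 => (hd x y z hxy hyz h2).2,
    fun _ h2 => (hd x y z hxy hyz h2).1⟩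

lemma trivWFS {P : Type*} [Lattice P] : IsWFS ((· ≤ ·) : P → P → Prop) (· = ·) := by
  refine ⟨fun x y h => ⟨y, h, rfl⟩, fun a b => ⟨?_, ?_⟩, fun x y => ⟨?_, ?_⟩⟩
  · exact fun h => ⟨h, fun x y hxy _ hby => le_of_le_of_eq hby hxy.symm⟩
  · exact fun h => h.1
  · rintro rfl
    exact ⟨le_refl _, fun a b _ _ hby => hby⟩
  · rintro ⟨hxy, hr⟩
    exact le_antisymm hxy (hr x y hxy (le_refl _) (le_refl _))

lemma Q_of_bot_top {Q : StarL n → StarL n → Prop} (hw : IsWide Q)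
    (hd : IsDecomposable Q) (h : Q .bot .top) {x y : StarL n} (hxy : x ≤ y) :
    Q x y := by
  have h1 : ∀ w : StarL n, Q .bot w ∧ Q w .top :=
    fun w => hd _ _ _ (bot_le' w) (le_top' w) h
  rcases (le_iff _ _).1 hxy with rfl | rfl | rfl
  · exact (h1 y).1
  · exact (h1 x).2
  · exact hw.1 x

/-- decoding of the classification -/
def dec : (Fin n → Fin 3) ⊕ Unit → (StarL n → StarL n → Prop)
  | .inl f => fun x y => x = y ∨ (∃ i, x = .bot ∧ y = .mid i ∧ f i = 1) ∨
      (∃ i, x = .mid i ∧ y = .top ∧ f i = 2)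
  | .inr _ => (· ≤ ·)

open Classical in
/-- encoding of the classification -/
noncomputable def enc (Q : StarL n → StarL n → Prop) : (Fin n → Fin 3) ⊕ Unit :=
  if Q .bot .top then .inr ⟨⟩
  else .inl fun i => if Q .bot (.mid i) then 1 else if Q (.mid i) .top then 2 else 0

lemma dec_wide (a : (Fin n → Fin 3) ⊕ Unit) : IsWide (dec a) := by
  cases a with
  | inr _ => exact ⟨fun x => le_refl x, fun x y h => h, fun x y z h1 h2 => le_trans h1 h2⟩
  | inl f =>
    refine ⟨fun x => Or.inl rfl, ?_, ?_⟩
    · rintro x y (rfl | ⟨i, rfl, rfl, _⟩ | ⟨i, rfl, rfl, _⟩)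
      · exact le_refl _
      · exact bot_le' _
      · exact le_top' _
    · rintro x y z (rfl | ⟨i, rfl, rfl, h1⟩ | ⟨i, rfl, rfl, h1⟩) h2
      · exact h2
      · rcases h2 with rfl | ⟨j, hj, rfl, h2⟩ | ⟨j, hj, rfl, h2⟩
        · exact Or.inr (Or.inl ⟨i, rfl, rfl, h1⟩)
        · simp at hj
        · simp only [StarL.mid.injEq] at hj
          exact absurd (h1.symm.trans (hj ▸ h2)) (by decide)
      · rcases h2 with rfl | ⟨j, hj, rfl, h2⟩ | ⟨j, hj, rfl, h2⟩
        · exact Or.inr (Or.inr ⟨i, rfl, rfl, h1⟩)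
        · simp at hj
        · simp at hj

lemma dec_decomp (a : (Fin n → Fin 3) ⊕ Unit) : IsDecomposable (dec a) := by
  cases a with
  | inr _ => exact fun x y z hxy hyz _ => ⟨hxy, hyz⟩
  | inl f =>
    rintro x y z hxy hyz (rfl | ⟨i, rfl, rfl, hd⟩ | ⟨i, rfl, rfl, hu⟩)
    · obtain rfl : x = y := le_antisymm hxy hyz
      exact ⟨Or.inl rfl, Or.inl rfl⟩
    · rcases (le_iff _ _).1 hyz with rfl | h | rfl
      · exact ⟨Or.inl rfl, Or.inr (Or.inl ⟨i, rfl, rfl, hd⟩)⟩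
      · simp at h
      · exact ⟨Or.inr (Or.inl ⟨i, rfl, rfl, hd⟩), Or.inl rfl⟩
    · rcases mid_le' hxy with rfl | rfl
      · exact ⟨Or.inl rfl, Or.inr (Or.inr ⟨i, rfl, rfl, hu⟩)⟩
      · exact ⟨Or.inr (Or.inr ⟨i, rfl, rfl, hu⟩), Or.inl rfl⟩

open Classical in
noncomputable def classEquiv (n : ℕ) :
    ((Fin n → Fin 3) ⊕ Unit) ≃
      {Q : StarL n → StarL n → Prop // IsWide Q ∧ IsDecomposable Q} where
  toFun a := ⟨dec a, dec_wide a, dec_decomp a⟩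
  invFun Q := enc Q.1
  left_inv a := by
    cases a with
    | inr u =>
      cases u
      simp only [enc, dec]
      exact if_pos (bot_le' (n := n) StarL.top)
    | inl f =>
      have hbt : ¬ dec (n := n) (.inl f) .bot .top := by simp [dec]
      have h1 : ∀ i, dec (n := n) (.inl f) .bot (.mid i) ↔ f i = 1 := by
        intro i; simp [dec]
      have h2 : ∀ i, dec (n := n) (.inl f) (.mid i) .top ↔ f i = 2 := by
        intro i; simp [dec]
      simp only [enc]
      rw [if_neg hbt]
      congr 1
      funext i
      split_ifs with ha hb
      · exact ((h1 i).1 ha).symm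
      · exact ((h2 i).1 hb).symm
      · rcases (by decide : ∀ a : Fin 3, a = 0 ∨ a = 1 ∨ a = 2) (f i) with h | h | h
        · exact h.symm
        · exact absurd ((h1 i).2 h) ha
        · exact absurd ((h2 i).2 h) hb
  right_inv Q := by
    obtain ⟨Q, hw, hd⟩ := Q
    apply Subtype.ext
    show dec (enc Q) = Q
    by_cases hQ : Q .bot .top
    · simp only [enc]
      rw [if_pos hQ]
      funext x y
      exact propext ⟨fun h => Q_of_bot_top hw hd hQ h, fun h => hw.2.1 _ _ h⟩
    · simp only [enc]
      rw [if_neg hQ]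
      funext x y
      apply propext
      constructor
      · rintro (rfl | ⟨i, rfl, rfl, h⟩ | ⟨i, rfl, rfl, h⟩)
        · exact hw.1 x
        · by_cases h1 : Q .bot (.mid i)
          · exact h1
          · simp only [if_neg h1] at h
            split_ifs at h <;> exact absurd h (by decide)
        · by_cases h1 : Q .bot (.mid i)
          · simp only [if_pos h1] at h
            exact absurd h (by decide)
          · simp only [if_neg h1] at h
            by_cases h2 : Q (.mid i) .top
            · exact h2
            · simp only [if_neg h2] at h
              exact absurd h (by decide)
      · intro hq
        rcases x with _ | i | _ <;> rcases y with _ | j | _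
        · exact Or.inl rfl
        · refine Or.inr (Or.inl ⟨j, rfl, rfl, ?_⟩)
          simp only [if_pos hq]
        · exact absurd hq hQ
        · exact absurd (hw.2.1 _ _ hq) (by simp [le_iff])
        · rcases (le_iff _ _).1 (hw.2.1 _ _ hq) with h | h | h
          · simp at h
          · simp at h
          · exact Or.inl h
        · refine Or.inr (Or.inr ⟨i, rfl, rfl, ?_⟩)
          have h1 : ¬ Q .bot (.mid i) := fun h1 => hQ (hw.2.2 _ _ _ h1 hq)
          simp only [if_neg h1, if_pos hq]
        · exact absurd (hw.2.1 _ _ hq) (by simp [le_iff])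
        · exact absurd (hw.2.1 _ _ hq) (by simp [le_iff])
        · exact Or.inl rfl

end StarLProof

/-- On `[2]^{*n}`, every wide decomposable subcategory is the class of weak
equivalences of some model structure, and there are exactly `3^n + 1` wide
decomposable subcategories. -/
theorem starL_weakEquivalenceSets (n : ℕ) :
    (∀ Q : StarL n → StarL n → Prop, IsWide Q → IsDecomposable Q →
      ∃ AC F C AF : StarL n → StarL n → Prop,
        IsModel AC F C AF ∧ ∀ x y, Comp AF AC x y ↔ Q x y) ∧
    Nat.card {Q : StarL n → StarL n → Prop // IsWide Q ∧ IsDecomposable Q} =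
      3 ^ n + 1 := by
  constructor
  · intro Q hw hd
    by_cases hQ : Q .bot .top
    · have hW : ∀ x y : StarL n, Comp (· = ·) (· ≤ ·) x y ↔ Q x y := by
        intro x y
        constructor
        · rintro ⟨z, h1, rfl⟩
          exact StarLProof.Q_of_bot_top hw hd hQ h1
        · intro h
          exact ⟨y, hw.2.1 _ _ h, rfl⟩
      exact ⟨(· ≤ ·), (· = ·), (· ≤ ·), (· = ·),
        ⟨StarLProof.trivWFS, StarLProof.trivWFS, fun _ _ h => h,
          StarLProof.twoOutOfThree_of_iff hW hw hd⟩, hW⟩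
    · have hW : ∀ x y, Comp (StarLProof.AFd fun i => Q .bot (.mid i))
          (StarLProof.ACu fun i => Q (.mid i) .top) x y ↔ Q x y := by
        intro x y
        rw [StarLProof.comp_iff]
        constructor
        · rintro (rfl | ⟨i, rfl, rfl, h⟩ | ⟨i, rfl, rfl, h⟩)
          · exact hw.1 x
          · exact h
          · exact h
        · intro hq
          rcases x with _ | i | _ <;> rcases y with _ | j | _
          · exact Or.inl rfl
          · exact Or.inr (Or.inl ⟨j, rfl, rfl, hq⟩)
          · exact absurd hq hQ
          · exact absurd (hw.2.1 _ _ hq) (by simp [StarLProof.le_iff])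
          · rcases (StarLProof.le_iff _ _).1 (hw.2.1 _ _ hq) with h | h | h
            · simp at h
            · simp at h
            · exact Or.inl h
          · exact Or.inr (Or.inr ⟨i, rfl, rfl, hq⟩)
          · exact absurd (hw.2.1 _ _ hq) (by simp [StarLProof.le_iff])
          · exact absurd (hw.2.1 _ _ hq) (by simp [StarLProof.le_iff])
          · exact Or.inl rfl
      refine ⟨_, _, _, _, ⟨StarLProof.wfs_AC _, StarLProof.wfs_C _, ?_,
        StarLProof.twoOutOfThree_of_iff hW hw hd⟩, hW⟩
      rintro x y (rfl | ⟨i, rfl, rfl, h⟩)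
      · refine ⟨le_refl _, fun i h1 h2 => ?_⟩
        subst h1
        exact absurd h2 (by simp)
      · exact ⟨StarLProof.le_top' _, fun j h1 _ => by simp at h1⟩
  · have h := Nat.card_congr (StarLProof.classEquiv n)
    rw [← h]
    simp [Nat.card_eq_fintype_card]
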